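/- Let ‖·‖ be a norm on ℝ^d, let f : ℝ^d → ℝ be ρ-weakly convex and L₀-Lipschitz with respect to ‖·‖, let W ⊆ ℝ^d be a nonempty closed convex set, and let w* ∈ W satisfy f(w*) ≤ f(w) for all w ∈ W. Then there exists g in the regular subdifferential ∂f(w*) such that ⟨g, v − w*⟩ ≥ 0 for all v ∈ W. -/

import Mathlib

open Set Filter

set_option maxHeartbeats 1000000

/-- Existence of a subgradient of a convex function at a constrained minimizer,
compatible with the normal cone of the constraint set. -/
lemma aux_subgrad {F : Type*} [AddCommGroup F] [Module ℝ F]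
    (h : F → ℝ) (wstar : F)
    (hconv : ∀ w v : F, ∀ l : ℝ, 0 ≤ l → l ≤ 1 →
      h (l • w + (1 - l) • v) ≤ l * h w + (1 - l) * h v)
    (hlb : ∀ u : F, ∃ b : ℝ, ∀ t : ℝ, 0 < t → t ≤ 1 → b ≤ (h (wstar + t • u) - h wstar) / t)
    (W : Set F) (hWconv : Convex ℝ W) (hwstar : wstar ∈ W)
    (hmin : ∀ w ∈ W, h wstar ≤ h w) :
    ∃ g : F →ₗ[ℝ] ℝ, (∀ u, g u ≤ h (wstar + u) - h wstar) ∧ ∀ v ∈ W, 0 ≤ g (v - wstar) := by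
  set Q : ℝ → F → ℝ := fun t u => (h (wstar + t • u) - h wstar) / t with hQ
  -- monotonicity of difference quotients
  have Qmono : ∀ (u : F) (s t : ℝ), 0 < s → s ≤ t → t ≤ 1 → Q s u ≤ Q t u := by
    intro u s t hs hst ht1
    have ht : 0 < t := lt_of_lt_of_le hs hst
    have hl0 : 0 ≤ s / t := by positivity
    have hl1 : s / t ≤ 1 := by
      rw [div_le_one ht]; exact hst
    have key := hconv (wstar + t • u) wstar (s / t) hl0 hl1
    have heq : (s / t) • (wstar + t • u) + (1 - s / t) • wstar = wstar + s • u := by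
      have hts : (s / t) * t = s := div_mul_cancel₀ s (ne_of_gt ht)
      rw [smul_add, smul_smul, hts]
      module
    rw [heq] at key
    have key2 : t * h (wstar + s • u) ≤ s * h (wstar + t • u) + (t - s) * h wstar := by
      have h2 := mul_le_mul_of_nonneg_left key ht.le
      have ht' : t ≠ 0 := ne_of_gt ht
      field_simp at h2
      linarith
    simp only [hQ]
    rw [div_le_div_iff₀ hs ht]
    nlinarith [key2]
  have Sne : ∀ u : F, ((fun t => Q t u) '' Ioc (0:ℝ) 1).Nonempty := by
    intro u; exact ⟨Q 1 u, 1, ⟨zero_lt_one, le_refl 1⟩, rfl⟩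
  have Sbdd : ∀ u : F, BddBelow ((fun t => Q t u) '' Ioc (0:ℝ) 1) := by
    intro u
    obtain ⟨b, hb⟩ := hlb u
    exact ⟨b, fun x ⟨t, ht, hx⟩ => hx ▸ hb t ht.1 ht.2⟩
  set p : F → ℝ := fun u => sInf ((fun t => Q t u) '' Ioc (0:ℝ) 1) with hp
  have pleQ : ∀ (u : F) (t : ℝ), 0 < t → t ≤ 1 → p u ≤ Q t u := by
    intro u t ht0 ht1
    exact csInf_le (Sbdd u) ⟨t, ⟨ht0, ht1⟩, rfl⟩
  have papprox : ∀ (u : F) (ε : ℝ), 0 < ε → ∃ t : ℝ, 0 < t ∧ t ≤ 1 ∧ Q t u < p u + ε := by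
    intro u ε hε
    obtain ⟨x, ⟨t, ht, rfl⟩, hlt⟩ :=
      exists_lt_of_csInf_lt (Sne u) (lt_add_of_pos_right (p u) hε)
    exact ⟨t, ht.1, ht.2, hlt⟩
  have p0 : p 0 = 0 := by
    have hQ0 : ∀ t : ℝ, Q t 0 = 0 := by intro t; simp [hQ]
    apply le_antisymm
    · have := pleQ 0 1 zero_lt_one le_rfl
      rwa [hQ0] at this
    · apply le_csInf (Sne 0)
      rintro b ⟨t, ht, rfl⟩
      exact (hQ0 t).symm.le
  have psub : ∀ u v : F, p (u + v) ≤ p u + p v := by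
    intro u v
    apply le_of_forall_pos_le_add
    intro ε hε
    obtain ⟨t1, ht10, ht11, ht1⟩ := papprox u (ε/2) (by positivity)
    obtain ⟨t2, ht20, ht21, ht2⟩ := papprox v (ε/2) (by positivity)
    set t := min t1 t2 with htdef
    have ht0 : 0 < t := lt_min ht10 ht20
    have ht1' : t ≤ 1 := le_trans (min_le_left _ _) ht11
    have hQu : Q t u ≤ Q t1 u := Qmono u t t1 ht0 (min_le_left _ _) ht11
    have hQv : Q t v ≤ Q t2 v := Qmono v t t2 ht0 (min_le_right _ _) ht21
    have hmid : Q (t/2) (u + v) ≤ Q t u + Q t v := by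
      have key := hconv (wstar + t • u) (wstar + t • v) (1/2) (by norm_num) (by norm_num)
      have heq : (1/2 : ℝ) • (wstar + t • u) + (1 - 1/2 : ℝ) • (wstar + t • v)
          = wstar + (t/2) • (u + v) := by
        norm_num
        module
      rw [heq] at key
      simp only [hQ]
      rw [← add_div, div_le_div_iff₀ (by positivity) ht0]
      nlinarith [key]
    calc p (u + v) ≤ Q (t/2) (u + v) := pleQ _ _ (by positivity) (by linarith)
      _ ≤ Q t u + Q t v := hmid
      _ ≤ Q t1 u + Q t2 v := add_le_add hQu hQv
      _ ≤ (p u + ε/2) + (p v + ε/2) := add_le_add (le_of_lt ht1) (le_of_lt ht2)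
      _ = p u + p v + ε := by ring
  have phom_le : ∀ (a : ℝ), 0 < a → ∀ u : F, p (a • u) ≤ a * p u := by
    intro a ha u
    apply le_of_forall_pos_le_add
    intro ε hε
    obtain ⟨t, ht0, ht1, htQ⟩ := papprox u (ε/a) (by positivity)
    set s := min 1 (t/a) with hsdef
    have hs0 : 0 < s := lt_min zero_lt_one (by positivity)
    have hs1 : s ≤ 1 := min_le_left _ _
    have hsa : s * a ≤ t := by
      have : s ≤ t / a := min_le_right _ _
      calc s * a ≤ (t/a) * a := by nlinarith
        _ = t := div_mul_cancel₀ t (ne_of_gt ha)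
    have hQs : Q s (a • u) = a * Q (s * a) u := by
      have hs' : s ≠ 0 := ne_of_gt hs0
      have ha' : a ≠ 0 := ne_of_gt ha
      simp only [hQ, smul_smul]
      field_simp
    have : p (a • u) ≤ Q s (a • u) := pleQ _ _ hs0 hs1
    rw [hQs] at this
    have hmono : Q (s * a) u ≤ Q t u := Qmono u (s*a) t (by positivity) hsa ht1
    calc p (a • u) ≤ a * Q (s * a) u := this
      _ ≤ a * Q t u := by nlinarith
      _ ≤ a * (p u + ε/a) := by nlinarith
      _ = a * p u + ε := by field_simp
  have phom : ∀ (a : ℝ), 0 < a → ∀ u : F, p (a • u) = a * p u := by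
    intro a ha u
    refine le_antisymm (phom_le a ha u) ?_
    have := phom_le a⁻¹ (by positivity) (a • u)
    rw [inv_smul_smul₀ (ne_of_gt ha)] at this
    calc a * p u ≤ a * (a⁻¹ * p (a • u)) := mul_le_mul_of_nonneg_left this ha.le
      _ = p (a • u) := by field_simp
  have pW : ∀ v ∈ W, 0 ≤ p (v - wstar) := by
    intro v hv
    apply le_csInf (Sne _)
    rintro b ⟨t, ⟨ht0, ht1⟩, rfl⟩
    have hmem : wstar + t • (v - wstar) ∈ W := by
      have : t • v + (1 - t) • wstar ∈ W :=
        hWconv hv hwstar (le_of_lt ht0) (by linarith) (by ring)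
      have heq : t • v + (1 - t) • wstar = wstar + t • (v - wstar) := by module
      rwa [heq] at this
    have hge := hmin _ hmem
    simp only [hQ]
    exact div_nonneg (by linarith) ht0.le
  -- the cone generated by W - wstar
  set K : Set F := {c : F | ∃ s : ℝ, 0 ≤ s ∧ ∃ v ∈ W, c = s • (v - wstar)} with hK
  have K0 : (0 : F) ∈ K := ⟨0, le_refl 0, wstar, hwstar, by simp⟩
  have KmemW : ∀ v ∈ W, v - wstar ∈ K := fun v hv => ⟨1, zero_le_one, v, hv, (one_smul ℝ _).symm⟩
  have pK : ∀ c ∈ K, 0 ≤ p c := by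
    rintro c ⟨s, hs, v, hv, rfl⟩
    rcases eq_or_lt_of_le hs with hs0 | hs0
    · simp [← hs0, p0]
    · rw [phom s hs0 (v - wstar)]
      exact mul_nonneg hs0.le (pW v hv)
  have Kadd : ∀ c1 ∈ K, ∀ c2 ∈ K, c1 + c2 ∈ K := by
    rintro _ ⟨s1, hs1, v1, hv1, rfl⟩ _ ⟨s2, hs2, v2, hv2, rfl⟩
    rcases eq_or_lt_of_le (add_nonneg hs1 hs2) with hs | hs
    · have h1 : s1 = 0 := by linarith
      have h2 : s2 = 0 := by linarith
      simp [h1, h2, K0]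
    · refine ⟨s1 + s2, hs.le, (s1/(s1+s2)) • v1 + (s2/(s1+s2)) • v2, ?_, ?_⟩
      · exact hWconv hv1 hv2 (by positivity) (by positivity) (by field_simp)
      · have hne : s1 + s2 ≠ 0 := ne_of_gt hs
        match_scalars <;> (field_simp; try ring)
  have Ksmul : ∀ (a : ℝ), 0 < a → ∀ c ∈ K, a • c ∈ K := by
    rintro a ha _ ⟨s, hs, v, hv, rfl⟩
    exact ⟨a * s, by positivity, v, hv, smul_smul a s _⟩
  -- the inf-convolution N
  set T : F → Set ℝ := fun u => (fun c => p (u + c)) '' K with hT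
  have Tne : ∀ u, (T u).Nonempty := fun u => ⟨p u, 0, K0, by simp⟩
  have Tbdd : ∀ u, BddBelow (T u) := by
    intro u
    refine ⟨-p (-u), ?_⟩
    rintro _ ⟨c, hc, rfl⟩
    have h1 : p c ≤ p (u + c) + p (-u) := by
      have := psub (u + c) (-u)
      have heq : u + c + -u = c := by abel
      rwa [heq] at this
    have := pK c hc
    linarith
  set N : F → ℝ := fun u => sInf (T u) with hN
  have NleP : ∀ u, ∀ c ∈ K, N u ≤ p (u + c) := by
    intro u c hc
    exact csInf_le (Tbdd u) ⟨c, hc, rfl⟩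
  have Nle : ∀ u, N u ≤ p u := by
    intro u
    have := NleP u 0 K0
    simpa using this
  have Napprox : ∀ u, ∀ ε : ℝ, 0 < ε → ∃ c ∈ K, p (u + c) < N u + ε := by
    intro u ε hε
    obtain ⟨x, ⟨c, hc, rfl⟩, hlt⟩ :=
      exists_lt_of_csInf_lt (Tne u) (lt_add_of_pos_right (N u) hε)
    exact ⟨c, hc, hlt⟩
  have Nsub : ∀ u v : F, N (u + v) ≤ N u + N v := by
    intro u v
    apply le_of_forall_pos_le_add
    intro ε hε
    obtain ⟨c1, hc1, h1⟩ := Napprox u (ε/2) (by positivity)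
    obtain ⟨c2, hc2, h2⟩ := Napprox v (ε/2) (by positivity)
    have hc : c1 + c2 ∈ K := Kadd c1 hc1 c2 hc2
    have heq : u + v + (c1 + c2) = (u + c1) + (v + c2) := by abel
    calc N (u + v) ≤ p (u + v + (c1 + c2)) := NleP _ _ hc
      _ = p ((u + c1) + (v + c2)) := by rw [heq]
      _ ≤ p (u + c1) + p (v + c2) := psub _ _
      _ ≤ (N u + ε/2) + (N v + ε/2) := add_le_add h1.le h2.le
      _ = N u + N v + ε := by ring
  have Nhom_le : ∀ (a : ℝ), 0 < a → ∀ u, N (a • u) ≤ a * N u := by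
    intro a ha u
    apply le_of_forall_pos_le_add
    intro ε hε
    obtain ⟨c, hc, hlt⟩ := Napprox u (ε/a) (by positivity)
    have h1 : N (a • u) ≤ p (a • u + a • c) := NleP _ _ (Ksmul a ha c hc)
    have h2 : a • u + a • c = a • (u + c) := (smul_add a u c).symm
    rw [h2, phom a ha] at h1
    calc N (a • u) ≤ a * p (u + c) := h1
      _ ≤ a * (N u + ε/a) := by nlinarith
      _ = a * N u + ε := by field_simp
  have Nhom : ∀ (a : ℝ), 0 < a → ∀ u, N (a • u) = a * N u := by
    intro a ha u
    refine le_antisymm (Nhom_le a ha u) ?_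
    have := Nhom_le a⁻¹ (by positivity) (a • u)
    rw [inv_smul_smul₀ (ne_of_gt ha)] at this
    calc a * N u ≤ a * (a⁻¹ * N (a • u)) := mul_le_mul_of_nonneg_left this ha.le
      _ = N (a • u) := by field_simp
  have N0 : 0 ≤ N 0 := by
    apply le_csInf (Tne 0)
    rintro b ⟨c, hc, rfl⟩
    simpa using pK c hc
  have NnegK : ∀ c ∈ K, N (-c) ≤ 0 := by
    intro c hc
    have := NleP (-c) c hc
    simpa [p0] using this
  -- Hahn-Banach
  obtain ⟨g, -, hg⟩ := exists_extension_of_le_sublinear ⟨⊥, 0⟩ N Nhom Nsub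
    (fun x => by
      have hx : (x : F) = 0 := (Submodule.mem_bot ℝ).mp x.2
      simp only [LinearPMap.mk_apply, LinearMap.zero_apply, hx]
      exact N0)
  refine ⟨g, ?_, ?_⟩
  · intro u
    have h1 : g u ≤ N u := hg u
    have h2 : N u ≤ p u := Nle u
    have h3 : p u ≤ Q 1 u := pleQ u 1 zero_lt_one le_rfl
    have h4 : Q 1 u = h (wstar + u) - h wstar := by simp [hQ]
    linarith
  · intro v hv
    have h1 : g (-(v - wstar)) ≤ N (-(v - wstar)) := hg _
    have h2 : N (-(v - wstar)) ≤ 0 := NnegK _ (KmemW v hv)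
    rw [map_neg] at h1
    linarith

lemma norm_combo {F : Type*} [NormedAddCommGroup F] [InnerProductSpace ℝ F] (a b : F) (l : ℝ) :
    ‖l • a + (1 - l) • b‖^2 = l * ‖a‖^2 + (1 - l) * ‖b‖^2 - l * (1 - l) * ‖a - b‖^2 := by
  rw [← real_inner_self_eq_norm_sq, ← real_inner_self_eq_norm_sq, ← real_inner_self_eq_norm_sq,
    ← real_inner_self_eq_norm_sq]
  simp only [inner_add_left, inner_add_right, inner_sub_left, inner_sub_right,
    real_inner_smul_left, real_inner_smul_right]
  rw [real_inner_comm b a]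
  ring

/-- `Nm` is a norm on `ℝ^d`. -/
def IsNorm {d : ℕ} (Nm : EuclideanSpace ℝ (Fin d) → ℝ) : Prop :=
  (∀ x, Nm x = 0 ↔ x = 0) ∧ (∀ (a : ℝ) (x), Nm (a • x) = |a| * Nm x) ∧
    ∀ x y, Nm (x + y) ≤ Nm x + Nm y

/-- `f` is `ρ`-weakly convex on `W` w.r.t. the norm `Nm`. -/
def WeaklyConvexOn {d : ℕ} (Nm : EuclideanSpace ℝ (Fin d) → ℝ) (ρ : ℝ)
    (W : Set (EuclideanSpace ℝ (Fin d))) (f : EuclideanSpace ℝ (Fin d) → ℝ) : Prop :=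
  ∀ w ∈ W, ∀ v ∈ W, ∀ l : ℝ, 0 ≤ l → l ≤ 1 →
    f (l • w + (1 - l) • v) ≤ l * f w + (1 - l) * f v + ρ * l * (1 - l) / 2 * Nm (w - v) ^ 2

/-- The regular subdifferential of `f` at `w` w.r.t. the norm `Nm`. -/
noncomputable def RegSubdiff {d : ℕ} (Nm : EuclideanSpace ℝ (Fin d) → ℝ)
    (f : EuclideanSpace ℝ (Fin d) → ℝ) (w : EuclideanSpace ℝ (Fin d)) :
    Set (EuclideanSpace ℝ (Fin d)) :=
  {g | 0 ≤ liminf (fun v => (f v - f w - (inner ℝ g (v - w) : ℝ)) / Nm (v - w))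
        (nhdsWithin w {w}ᶜ)}

/-- First-order stationarity conditions for weakly convex optimization: a minimizer `w*`
of a `ρ`-weakly convex, `L₀`-Lipschitz `f` over a nonempty closed convex set `W` admits
`g ∈ ∂f(w*)` with `⟨g, v − w*⟩ ≥ 0` for all `v ∈ W`. -/
theorem stmt_10 (d : ℕ) (Nm : EuclideanSpace ℝ (Fin d) → ℝ) (hNm : IsNorm Nm)
    (f : EuclideanSpace ℝ (Fin d) → ℝ) (ρ L₀ : ℝ) (hρ : 0 ≤ ρ)
    (hwc : WeaklyConvexOn Nm ρ univ f)
    (hlip : ∀ v w, |f v - f w| ≤ L₀ * Nm (v - w))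
    (W : Set (EuclideanSpace ℝ (Fin d))) (hWne : W.Nonempty) (hWclosed : IsClosed W)
    (hWconv : Convex ℝ W)
    (wstar : EuclideanSpace ℝ (Fin d)) (hwstar : wstar ∈ W)
    (hmin : ∀ w ∈ W, f wstar ≤ f w) :
    ∃ g ∈ RegSubdiff Nm f wstar, ∀ v ∈ W, (0 : ℝ) ≤ inner ℝ g (v - wstar) := by
  classical
  obtain ⟨hNm0, hNmsmul, hNmadd⟩ := hNm
  have hNmzero : Nm 0 = 0 := (hNm0 0).mpr rfl
  have hNmneg : ∀ x, Nm (-x) = Nm x := by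
    intro x
    have := hNmsmul (-1) x
    simpa using this
  have hNmnonneg : ∀ x, 0 ≤ Nm x := by
    intro x
    have h1 : Nm (x + -x) ≤ Nm x + Nm (-x) := hNmadd x (-x)
    rw [add_neg_cancel, hNmzero, hNmneg] at h1
    linarith
  -- the subsingleton case
  rcases subsingleton_or_nontrivial (EuclideanSpace ℝ (Fin d)) with hss | hnt
  · refine ⟨0, ?_, ?_⟩
    · have hempty : ({wstar}ᶜ : Set (EuclideanSpace ℝ (Fin d))) = ∅ := by
        rw [Set.eq_empty_iff_forall_notMem]
        intro x hx
        exact hx (Subsingleton.elim x wstar)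
      simp only [RegSubdiff, Set.mem_setOf_eq, hempty, nhdsWithin_empty]
      rw [Filter.liminf_eq]
      simp [Real.sSup_univ]
    · intro v hv
      simp
  -- the main case
  -- upper bound for Nm
  set C : ℝ := ∑ i : Fin d, Nm (EuclideanSpace.single i 1) with hC
  have hCnonneg : 0 ≤ C := Finset.sum_nonneg fun i _ => hNmnonneg _
  have habs : ∀ (x : EuclideanSpace ℝ (Fin d)) (i : Fin d), |x i| ≤ ‖x‖ := by
    intro x i
    rw [EuclideanSpace.norm_eq, ← Real.sqrt_sq_eq_abs]
    apply Real.sqrt_le_sqrt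
    have := Finset.single_le_sum (f := fun j => ‖x j‖ ^ 2)
      (fun j _ => by positivity) (Finset.mem_univ i)
    simpa [Real.norm_eq_abs, sq_abs] using this
  have hsum : ∀ x, Nm x ≤ C * ‖x‖ := by
    intro x
    have hx : x = ∑ i : Fin d, x i • EuclideanSpace.single i (1:ℝ) := by
      have h1 := (EuclideanSpace.basisFun (Fin d) ℝ).sum_repr x
      simp only [EuclideanSpace.basisFun_apply, EuclideanSpace.basisFun_repr] at h1
      exact h1.symm
    calc Nm x = Nm (∑ i : Fin d, x i • EuclideanSpace.single i (1:ℝ)) := by rw [← hx]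
      _ ≤ ∑ i : Fin d, Nm (x i • EuclideanSpace.single i (1:ℝ)) :=
          Finset.le_sum_of_subadditive Nm hNmzero.le hNmadd _ _
      _ = ∑ i : Fin d, |x i| * Nm (EuclideanSpace.single i (1:ℝ)) := by
          simp only [hNmsmul]
      _ ≤ ∑ i : Fin d, ‖x‖ * Nm (EuclideanSpace.single i (1:ℝ)) := by
          apply Finset.sum_le_sum
          intro i _
          exact mul_le_mul_of_nonneg_right (habs x i) (hNmnonneg _)
      _ = C * ‖x‖ := by rw [← Finset.mul_sum, mul_comm]
  -- lower bound for Nm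
  obtain ⟨c, hcpos, hclow⟩ : ∃ c : ℝ, 0 < c ∧ ∀ x, c * ‖x‖ ≤ Nm x := by
    have hcont : Continuous Nm := by
      have hlipNm : LipschitzWith (Real.toNNReal C) Nm := by
        apply LipschitzWith.of_dist_le_mul
        intro x y
        rw [Real.dist_eq, dist_eq_norm, Real.coe_toNNReal C hCnonneg, abs_sub_le_iff]
        have hxy : Nm (x - y) ≤ C * ‖x - y‖ := hsum (x - y)
        constructor
        · have h1 : Nm x ≤ Nm (x - y) + Nm y := by
            have := hNmadd (x - y) y
            simpa using this
          linarith
        · have h1 : Nm y ≤ Nm (x - y) + Nm x := by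
            have := hNmadd (y - x) x
            have h2 : Nm (y - x) = Nm (x - y) := by
              rw [show y - x = -(x - y) by abel, hNmneg]
            simpa [h2] using this
          linarith
      exact hlipNm.continuous
    have hsph : (Metric.sphere (0 : EuclideanSpace ℝ (Fin d)) 1).Nonempty :=
      NormedSpace.sphere_nonempty.mpr zero_le_one
    obtain ⟨x₀, hx₀, hminNm⟩ :=
      (isCompact_sphere (0 : EuclideanSpace ℝ (Fin d)) 1).exists_isMinOn hsph hcont.continuousOn
    have hx₀norm : ‖x₀‖ = 1 := by rwa [mem_sphere_zero_iff_norm] at hx₀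
    have hx₀ne : x₀ ≠ 0 := by
      intro hzero
      rw [hzero, norm_zero] at hx₀norm
      norm_num at hx₀norm
    have hcpos : 0 < Nm x₀ := by
      rcases (hNmnonneg x₀).lt_or_eq with h | h
      · exact h
      · exact absurd ((hNm0 x₀).mp h.symm) hx₀ne
    refine ⟨Nm x₀, hcpos, fun x => ?_⟩
    rcases eq_or_ne x 0 with rfl | hx
    · simp [hNmzero]
    · have hxn : (0:ℝ) < ‖x‖ := norm_pos_iff.mpr hx
      have humem : ‖x‖⁻¹ • x ∈ Metric.sphere (0 : EuclideanSpace ℝ (Fin d)) 1 := by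
        rw [mem_sphere_zero_iff_norm, norm_smul, norm_inv, norm_norm]
        field_simp
      have hmle : Nm x₀ ≤ Nm (‖x‖⁻¹ • x) := isMinOn_iff.mp hminNm _ humem
      rw [hNmsmul, abs_of_pos (by positivity)] at hmle
      calc Nm x₀ * ‖x‖ ≤ (‖x‖⁻¹ * Nm x) * ‖x‖ := mul_le_mul_of_nonneg_right hmle hxn.le
        _ = Nm x := by field_simp
  -- the convexified function
  set μ : ℝ := ρ * C ^ 2 with hμdef
  have hμ : 0 ≤ μ := mul_nonneg hρ (sq_nonneg C)
  set h : EuclideanSpace ℝ (Fin d) → ℝ := fun w => f w + μ / 2 * ‖w - wstar‖ ^ 2 with hh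
  have hconv : ∀ w v : EuclideanSpace ℝ (Fin d), ∀ l : ℝ, 0 ≤ l → l ≤ 1 →
      h (l • w + (1 - l) • v) ≤ l * h w + (1 - l) * h v := by
    intro w v l hl0 hl1
    have hwk := hwc w (mem_univ w) v (mem_univ v) l hl0 hl1
    have hid : ‖(l • w + (1 - l) • v) - wstar‖ ^ 2
        = l * ‖w - wstar‖ ^ 2 + (1 - l) * ‖v - wstar‖ ^ 2 - l * (1 - l) * ‖w - v‖ ^ 2 := by
      have h0 : (l • w + (1 - l) • v) - wstar = l • (w - wstar) + (1 - l) • (v - wstar) := by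
        module
      rw [h0, norm_combo]
      have h1 : (w - wstar) - (v - wstar) = w - v := by abel
      rw [h1]
    have hNmle : Nm (w - v) ^ 2 ≤ C ^ 2 * ‖w - v‖ ^ 2 := by
      have := hsum (w - v)
      nlinarith [hNmnonneg (w - v), norm_nonneg (w - v)]
    have hcoef : (0:ℝ) ≤ ρ * l * (1 - l) / 2 := by
      have : (0:ℝ) ≤ 1 - l := by linarith
      positivity
    have key := mul_le_mul_of_nonneg_left hNmle hcoef
    simp only [hh]
    rw [hid, hμdef]
    nlinarith [hwk, key]
  have hlb : ∀ u, ∃ b : ℝ, ∀ t : ℝ, 0 < t → t ≤ 1 →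
      b ≤ (h (wstar + t • u) - h wstar) / t := by
    intro u
    refine ⟨-(L₀ * Nm u), fun t ht0 ht1 => ?_⟩
    rw [le_div_iff₀ ht0]
    have harg : (wstar + t • u) - wstar = t • u := by abel
    have hfl : -(L₀ * Nm (t • u)) ≤ f (wstar + t • u) - f wstar := by
      have := hlip (wstar + t • u) wstar
      rw [harg] at this
      linarith [(abs_le.mp this).1]
    have hNmt : Nm (t • u) = t * Nm u := by rw [hNmsmul, abs_of_pos ht0]
    simp only [hh]
    rw [harg, sub_self, norm_zero]
    have hq : (0:ℝ) ≤ μ / 2 * ‖t • u‖ ^ 2 := by positivity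
    rw [hNmt] at hfl
    nlinarith [hfl, hq]
  have hminh : ∀ w ∈ W, h wstar ≤ h w := by
    intro w hw
    simp only [hh, sub_self, norm_zero]
    have := hmin w hw
    nlinarith [sq_nonneg ‖w - wstar‖, hμ]
  obtain ⟨g, hgsub, hgpos⟩ := aux_subgrad h wstar hconv hlb W hWconv hwstar hminh
  obtain ⟨gc, hgc⟩ : ∃ gc : EuclideanSpace ℝ (Fin d) →L[ℝ] ℝ,
      gc = LinearMap.toContinuousLinearMap g := ⟨_, rfl⟩
  have hgcapp : ∀ x, gc x = g x := by
    intro x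
    rw [hgc]
    rfl
  obtain ⟨gv, hgv⟩ : ∃ gv : EuclideanSpace ℝ (Fin d),
      gv = (InnerProductSpace.toDual ℝ (EuclideanSpace ℝ (Fin d))).symm gc := ⟨_, rfl⟩
  have hinner : ∀ x, (inner ℝ gv x : ℝ) = g x := by
    intro x
    rw [hgv, InnerProductSpace.toDual_symm_apply]
    exact hgcapp x
  refine ⟨gv, ?_, ?_⟩
  · -- membership in the regular subdifferential
    simp only [RegSubdiff, Set.mem_setOf_eq]
    haveI : Filter.NeBot (nhdsWithin wstar {wstar}ᶜ) :=
      Module.punctured_nhds_neBot ℝ (EuclideanSpace ℝ (Fin d)) wstar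
    obtain ⟨Kc, hKc⟩ : ∃ x : ℝ, x = μ / (2 * c) := ⟨_, rfl⟩
    have hKc0 : 0 ≤ Kc := by
      rw [hKc]
      exact div_nonneg hμ (by linarith)
    have hDpos : ∀ v : EuclideanSpace ℝ (Fin d), v ≠ wstar → 0 < Nm (v - wstar) := by
      intro v hv
      rcases (hNmnonneg (v - wstar)).lt_or_eq with hlt | heq
      · exact hlt
      · exact absurd (sub_eq_zero.mp ((hNm0 _).mp heq.symm)) hv
    have hnum : ∀ v : EuclideanSpace ℝ (Fin d),
        -(μ / 2) * ‖v - wstar‖ ^ 2 ≤ f v - f wstar - g (v - wstar) := by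
      intro v
      have h1 := hgsub (v - wstar)
      rw [add_sub_cancel] at h1
      simp only [hh, sub_self, norm_zero] at h1
      nlinarith [h1]
    have hptl : ∀ v : EuclideanSpace ℝ (Fin d), v ≠ wstar → -Kc * ‖v - wstar‖
        ≤ (f v - f wstar - (inner ℝ gv (v - wstar) : ℝ)) / Nm (v - wstar) := by
      intro v hv
      have hD := hDpos v hv
      rw [le_div_iff₀ hD, hinner]
      have key := mul_le_mul_of_nonneg_left (hclow (v - wstar))
        (mul_nonneg hKc0 (norm_nonneg (v - wstar)))
      have e1 : Kc * ‖v - wstar‖ * (c * ‖v - wstar‖) = μ / 2 * ‖v - wstar‖ ^ 2 := by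
        rw [hKc]
        field_simp
      have := hnum v
      nlinarith [key, e1]
    have hptu : ∀ v : EuclideanSpace ℝ (Fin d), v ≠ wstar → (f v - f wstar - (inner ℝ gv (v - wstar) : ℝ)) / Nm (v - wstar) ≤ L₀ + ‖gc‖ / c := by
      intro v hv
      have hD := hDpos v hv
      rw [div_le_iff₀ hD, hinner]
      have hfu : f v - f wstar ≤ L₀ * Nm (v - wstar) := (abs_le.mp (hlip v wstar)).2
      have hgl : -(‖gc‖ * ‖v - wstar‖) ≤ g (v - wstar) := by
        have h1 : ‖gc (v - wstar)‖ ≤ ‖gc‖ * ‖v - wstar‖ := gc.le_opNorm _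
        rw [hgcapp, Real.norm_eq_abs] at h1
        linarith [(abs_le.mp h1).1]
      have key2 := mul_le_mul_of_nonneg_left (hclow (v - wstar))
        (div_nonneg (norm_nonneg gc) hcpos.le)
      have e2 : ‖gc‖ / c * (c * ‖v - wstar‖) = ‖gc‖ * ‖v - wstar‖ := by
        field_simp
      nlinarith [hfu, hgl, key2, e2]
    have hevl : ∀ᶠ v in nhdsWithin wstar {wstar}ᶜ, -Kc * ‖v - wstar‖
        ≤ (f v - f wstar - (inner ℝ gv (v - wstar) : ℝ)) / Nm (v - wstar) := by
      filter_upwards [self_mem_nhdsWithin] with v hv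
      exact hptl v hv
    have hevu : ∀ᶠ v in nhdsWithin wstar {wstar}ᶜ, (f v - f wstar - (inner ℝ gv (v - wstar) : ℝ)) / Nm (v - wstar) ≤ L₀ + ‖gc‖ / c := by
      filter_upwards [self_mem_nhdsWithin] with v hv
      exact hptu v hv
    have htends : Filter.Tendsto (fun v : EuclideanSpace ℝ (Fin d) => -Kc * ‖v - wstar‖)
        (nhdsWithin wstar {wstar}ᶜ) (nhds 0) := by
      have hcontf : Continuous (fun v : EuclideanSpace ℝ (Fin d) => -Kc * ‖v - wstar‖) := by
        fun_prop
      have h1 := hcontf.tendsto wstar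
      simp only [sub_self, norm_zero, mul_zero] at h1
      exact h1.mono_left nhdsWithin_le_nhds
    have h1 : Filter.liminf (fun v : EuclideanSpace ℝ (Fin d) => -Kc * ‖v - wstar‖)
        (nhdsWithin wstar {wstar}ᶜ) = 0 := htends.liminf_eq
    have h2 := Filter.liminf_le_liminf hevl htends.isBoundedUnder_ge
      (Filter.isCoboundedUnder_ge_of_eventually_le _ hevu)
    rw [h1] at h2
    exact h2
  · intro v hv
    rw [hinner]
    exact hgpos v hv
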